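/- arXiv:1105.3638 — 2 statements merged into one kernel-verified Lean document; each statement's English description precedes it below -/
import Mathlib

section
/- For any positive definite real d×d matrix A, the Lyapunov equation AY + YA = B has a unique solution, which can be represented as Y = ∫₀^∞ exp(−vA) B exp(−vA) dv. -/
open Matrix MeasureTheory Set

set_option maxHeartbeats 1000000

private lemma int_exp_helper {c : ℝ} (hc : 0 < c) :
    ∫ v in Set.Ioi (0:ℝ), Real.exp (-(c*v)) = c⁻¹ := by
  have h := integral_comp_mul_left_Ioi (fun x => Real.exp (-x)) 0 hc
  simp only [mul_zero, integral_exp_neg_Ioi_zero, smul_eq_mul, mul_one] at h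
  exact h

/-- For any symmetric positive definite real `d × d` matrix `A` and any
`d × d` matrix `B`, the Lyapunov equation `A * Y + Y * A = B` has a unique solution, and the
matrix `∫ v in (0,∞), exp (-v • A) * B * exp (-v • A) dv` (entrywise improper integral) is a
solution (hence the solution). -/
theorem lyapunov_unique_solution_integral_repr
    {d : ℕ} (A B : Matrix (Fin d) (Fin d) ℝ) (hA : A.PosDef) :
    (∃! Y : Matrix (Fin d) (Fin d) ℝ, A * Y + Y * A = B) ∧
      (A * (Matrix.of fun i j =>
          ∫ v in Set.Ioi (0 : ℝ),
            (NormedSpace.exp (-(v • A)) * B * NormedSpace.exp (-(v • A))) i j) +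
        (Matrix.of fun i j =>
          ∫ v in Set.Ioi (0 : ℝ),
            (NormedSpace.exp (-(v • A)) * B * NormedSpace.exp (-(v • A))) i j) * A = B) := by
  have hH := hA.1
  set U : Matrix (Fin d) (Fin d) ℝ := (hH.eigenvectorUnitary : Matrix (Fin d) (Fin d) ℝ) with hUdef
  set μ : Fin d → ℝ := hH.eigenvalues with hμdef
  have hμ : ∀ i, 0 < μ i := fun i => hA.eigenvalues_pos i
  have hs : ∀ l k : Fin d, (0:ℝ) < μ l + μ k := fun l k => add_pos (hμ l) (hμ k)
  have hU2 : U * star U = 1 := (Matrix.mem_unitaryGroup_iff).mp (hH.eigenvectorUnitary).2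
  have hU1 : star U * U = 1 := (Matrix.mem_unitaryGroup_iff').mp (hH.eigenvectorUnitary).2
  have hspec : A = U * diagonal μ * star U := by
    have := hH.spectral_theorem
    simpa using this
  have hUinv : U⁻¹ = star U := inv_eq_right_inv hU2
  set C : Matrix (Fin d) (Fin d) ℝ := star U * (B * U) with hCdef
  have hUCU : U * C * star U = B := by
    rw [hCdef]
    simp only [Matrix.mul_assoc]
    rw [hU2, Matrix.mul_one, ← Matrix.mul_assoc, hU2, Matrix.one_mul]
  -- exponential formula
  have hexp : ∀ v : ℝ, NormedSpace.exp (-(v • A))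
      = U * diagonal (fun k => Real.exp (-(v * μ k))) * star U := by
    intro v
    have h1 : -(v • A) = U * diagonal (fun k => -(v * μ k)) * U⁻¹ := by
      rw [hUinv, hspec]
      have : diagonal (fun k => -(v * μ k)) = -(v • diagonal μ) := by
        rw [← Matrix.diagonal_smul, ← Matrix.diagonal_neg]
        rfl
      rw [this]
      simp [Matrix.mul_smul, Matrix.smul_mul]
    rw [h1, Matrix.exp_conj U _ ⟨⟨U, star U, hU2, hU1⟩, rfl⟩, hUinv,
      Matrix.exp_diagonal]
    congr 1
    congr 1
    funext k
    rw [Pi.exp_def]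
    exact (Real.exp_eq_exp_ℝ ▸ rfl)
  -- entrywise formula of the integrand
  have hentry : ∀ (v : ℝ) (i j : Fin d),
      (NormedSpace.exp (-(v • A)) * B * NormedSpace.exp (-(v • A))) i j
      = ∑ k, ∑ l, U i l * C l k * U j k * Real.exp (-((μ l + μ k) * v)) := by
    intro v i j
    rw [hexp v]
    have collapse :
        (U * diagonal (fun k => Real.exp (-(v * μ k))) * star U) * B *
          (U * diagonal (fun k => Real.exp (-(v * μ k))) * star U)
        = U * (diagonal (fun k => Real.exp (-(v * μ k))) * C *
            diagonal (fun k => Real.exp (-(v * μ k)))) * star U := by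
      rw [hCdef]
      simp only [Matrix.mul_assoc]
    rw [collapse, Matrix.mul_apply]
    refine Finset.sum_congr rfl fun k _ => ?_
    rw [Matrix.mul_apply, Finset.sum_mul]
    refine Finset.sum_congr rfl fun l _ => ?_
    rw [Matrix.mul_diagonal, Matrix.diagonal_mul, Matrix.star_apply, star_trivial]
    rw [show Real.exp (-((μ l + μ k) * v)) = Real.exp (-(v * μ l)) * Real.exp (-(v * μ k)) from by
      rw [← Real.exp_add]; congr 1; ring]
    ring
  -- integrability of each term
  have hterm_int : ∀ (i j k l : Fin d),
      IntegrableOn (fun v => U i l * C l k * U j k * Real.exp (-((μ l + μ k) * v)))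
        (Set.Ioi (0:ℝ)) := by
    intro i j k l
    have h1 := (exp_neg_integrableOn_Ioi 0 (hs l k)).const_mul (U i l * C l k * U j k)
    simp only [neg_mul] at h1
    exact h1
  -- the value of the entrywise integral
  have hint : ∀ i j : Fin d,
      (∫ v in Set.Ioi (0:ℝ),
        (NormedSpace.exp (-(v • A)) * B * NormedSpace.exp (-(v • A))) i j)
      = ∑ k, ∑ l, U i l * C l k * U j k * (μ l + μ k)⁻¹ := by
    intro i j
    simp only [hentry]
    rw [integral_finset_sum _ (fun k _ => integrable_finset_sum _ (fun l _ => hterm_int i j k l))]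
    refine Finset.sum_congr rfl fun k _ => ?_
    rw [integral_finset_sum _ (fun l _ => hterm_int i j k l)]
    refine Finset.sum_congr rfl fun l _ => ?_
    rw [MeasureTheory.integral_const_mul, int_exp_helper (hs l k)]
  -- the integral matrix equals U * Z * star U
  set Z : Matrix (Fin d) (Fin d) ℝ :=
    Matrix.of (fun l k => C l k * (μ l + μ k)⁻¹) with hZdef
  have hYZ : (Matrix.of fun i j =>
      ∫ v in Set.Ioi (0 : ℝ),
        (NormedSpace.exp (-(v • A)) * B * NormedSpace.exp (-(v • A))) i j)
      = U * Z * star U := by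
    ext i j
    rw [Matrix.of_apply, hint i j, Matrix.mul_apply]
    refine Finset.sum_congr rfl fun k _ => ?_
    rw [Matrix.mul_apply, Finset.sum_mul]
    refine Finset.sum_congr rfl fun l _ => ?_
    rw [hZdef, Matrix.of_apply, Matrix.star_apply, star_trivial]
    ring
  -- the diagonal Lyapunov identity
  have hDZ : diagonal μ * Z + Z * diagonal μ = C := by
    ext l k
    rw [Matrix.add_apply, Matrix.diagonal_mul, Matrix.mul_diagonal, hZdef, Matrix.of_apply]
    have hne : μ l + μ k ≠ 0 := (hs l k).ne'
    field_simp
  -- solution property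
  have hsolve : ∀ W : Matrix (Fin d) (Fin d) ℝ,
      A * (U * W * star U) + (U * W * star U) * A
        = U * (diagonal μ * W + W * diagonal μ) * star U := by
    intro W
    rw [hspec]
    rw [Matrix.mul_add, Matrix.add_mul]
    congr 1
    · simp only [Matrix.mul_assoc]
      rw [show star U * (U * (W * star U)) = W * star U from by
        rw [← Matrix.mul_assoc, hU1, Matrix.one_mul]]
    · simp only [Matrix.mul_assoc]
      rw [show star U * (U * (diagonal μ * star U)) = diagonal μ * star U from by
        rw [← Matrix.mul_assoc, hU1, Matrix.one_mul]]
  have hsol : A * (U * Z * star U) + (U * Z * star U) * A = B := by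
    rw [hsolve Z, hDZ, hUCU]
  -- injectivity / uniqueness
  have sandwich : ∀ M : Matrix (Fin d) (Fin d) ℝ, star U * (U * M * star U) * U = M := by
    intro M
    simp only [Matrix.mul_assoc]
    rw [hU1, Matrix.mul_one, ← Matrix.mul_assoc, hU1, Matrix.one_mul]
  have sandwich' : ∀ M : Matrix (Fin d) (Fin d) ℝ, U * (star U * M * U) * star U = M := by
    intro M
    simp only [Matrix.mul_assoc]
    rw [hU2, Matrix.mul_one, ← Matrix.mul_assoc, hU2, Matrix.one_mul]
  have hinj : ∀ W : Matrix (Fin d) (Fin d) ℝ, A * W + W * A = 0 → W = 0 := by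
    intro W hW
    have hWU : W = U * (star U * W * U) * star U := (sandwich' W).symm
    have h0 : diagonal μ * (star U * W * U) + (star U * W * U) * diagonal μ = 0 := by
      have e := hsolve (star U * W * U)
      rw [← hWU, hW] at e
      calc diagonal μ * (star U * W * U) + (star U * W * U) * diagonal μ
          = star U * (U * (diagonal μ * (star U * W * U) + (star U * W * U) * diagonal μ)
              * star U) * U := (sandwich _).symm
        _ = star U * (0 : Matrix (Fin d) (Fin d) ℝ) * U := by rw [← e]
        _ = 0 := by rw [Matrix.mul_zero, Matrix.zero_mul]
    have hZ0 : star U * W * U = 0 := by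
      ext l k
      have h2 : μ l * (star U * W * U) l k + (star U * W * U) l k * μ k = 0 := by
        have := congr_fun (congr_fun h0 l) k
        simpa [Matrix.add_apply, Matrix.diagonal_mul, Matrix.mul_diagonal] using this
      have h3 : (μ l + μ k) * (star U * W * U) l k = 0 := by linarith [h2]
      rcases mul_eq_zero.mp h3 with h | h
      · exact absurd h (ne_of_gt (hs l k))
      · exact h
    rw [hWU, hZ0, Matrix.mul_zero, Matrix.zero_mul]
  refine ⟨⟨U * Z * star U, hsol, fun y hy => ?_⟩, ?_⟩
  · have : A * (y - (U * Z * star U)) + (y - (U * Z * star U)) * A = 0 := by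
      rw [Matrix.mul_sub, Matrix.sub_mul]
      rw [show A * y - A * (U * Z * star U) + (y * A - (U * Z * star U) * A)
          = (A * y + y * A) - (A * (U * Z * star U) + (U * Z * star U) * A) from by abel]
      rw [hy, hsol, sub_self]
    exact sub_eq_zero.mp (hinj _ this)
  · rw [hYZ]
    exact hsol
end

section
/- For positive definite d×d matrices A and B whose smallest eigenvalues are bounded below by c > 0, there is a constant C depending only on d and c such that ‖A^{-1/2} − B^{-1/2}‖ ≤ C · (max{‖A‖, ‖B‖})^{1/2} · ‖A^{-1}‖ · ‖B^{-1}‖ · ‖A − B‖. -/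
open Matrix

attribute [local instance] Matrix.frobeniusNormedAddCommGroup Matrix.frobeniusNormedSpace

/-- The positive semidefinite square root of a positive semidefinite matrix
(as defined in Mathlib of December 2024, since removed). -/
noncomputable def Matrix.PosSemidef.sqrt {n 𝕜 : Type*} [RCLike 𝕜] [PartialOrder 𝕜] [StarOrderedRing 𝕜] [Fintype n] [DecidableEq n]
    {A : Matrix n n 𝕜} (hA : A.PosSemidef) : Matrix n n 𝕜 :=
  hA.1.eigenvectorUnitary.1 * diagonal ((↑) ∘ (√·) ∘ hA.1.eigenvalues) *
  (star hA.1.eigenvectorUnitary : Matrix n n 𝕜)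

set_option linter.unusedSectionVars false
set_option maxHeartbeats 1000000

section InvSqrtAuxiliary

variable {n : Type*} [Fintype n] [DecidableEq n]

variable {n : Type*} [Fintype n] [DecidableEq n]

private lemma my_norm_eq_sqrt (X : Matrix n n ℝ) : ‖X‖ = Real.sqrt (∑ i, ∑ j, (X i j)^2) := by
  rw [Matrix.frobenius_norm_def, Real.sqrt_eq_rpow]
  congr 1
  refine Finset.sum_congr rfl fun i _ => Finset.sum_congr rfl fun j _ => ?_
  rw [Real.norm_eq_abs, Real.rpow_two, sq_abs]

private lemma my_trace_form (X Y : Matrix n n ℝ) :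
    (Xᴴ * Y).trace = ∑ i, ∑ j, X i j * Y i j := by
  simp only [Matrix.trace, Matrix.diag, Matrix.mul_apply, Matrix.conjTranspose_apply,
    RCLike.star_def, RCLike.conj_to_real]
  exact Finset.sum_comm

private lemma my_normsq_eq_trace (X : Matrix n n ℝ) : (Xᴴ * X).trace = ‖X‖^2 := by
  rw [my_trace_form, my_norm_eq_sqrt, Real.sq_sqrt (by positivity)]
  simp [sq]

private lemma my_norm_eq_sqrt_trace (X : Matrix n n ℝ) : ‖X‖ = Real.sqrt ((Xᴴ * X).trace) := by
  rw [my_normsq_eq_trace, Real.sqrt_sq (norm_nonneg _)]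

private lemma my_trace_form_le (X Y : Matrix n n ℝ) :
    (Xᴴ * Y).trace ≤ ‖X‖ * ‖Y‖ := by
  rw [my_trace_form, my_norm_eq_sqrt, my_norm_eq_sqrt, ← Real.sqrt_mul (by positivity)]
  calc ∑ i, ∑ j, X i j * Y i j ≤ |∑ i, ∑ j, X i j * Y i j| := le_abs_self _
  _ = Real.sqrt ((∑ i, ∑ j, X i j * Y i j)^2) := (Real.sqrt_sq_eq_abs _).symm
  _ ≤ Real.sqrt ((∑ i, ∑ j, (X i j)^2) * (∑ i, ∑ j, (Y i j)^2)) := by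
      apply Real.sqrt_le_sqrt
      simp_rw [← Finset.sum_product' (γ := n) (s := Finset.univ) (t := Finset.univ)]
      exact Finset.sum_mul_sq_le_sq_mul_sq _ _ _

private lemma my_trace_psd_nonneg {N : Matrix n n ℝ} (hN : N.PosSemidef) : 0 ≤ N.trace := by
  have h : ∀ i, 0 ≤ N i i := by
    intro i
    exact hN.diag_nonneg
  exact Finset.sum_nonneg fun i _ => h i

private lemma my_smul_one (s : ℝ) : (s • 1 : Matrix n n ℝ) = diagonal (fun _ => s) := by
  ext i j
  by_cases h : i = j <;> simp [Matrix.one_apply, diagonal_apply, h]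

private lemma my_conj_sub_smul {V : Matrix n n ℝ} (hV2 : V * Vᴴ = 1) (f : n → ℝ) (s : ℝ) :
    V * diagonal f * Vᴴ - s • 1 = V * diagonal (fun i => f i - s) * Vᴴ := by
  have h1 : (s • 1 : Matrix n n ℝ) = V * (s • (1 : Matrix n n ℝ)) * Vᴴ := by
    rw [mul_smul_comm, smul_mul_assoc, mul_one, hV2]
  rw [h1, ← sub_mul, ← mul_sub, my_smul_one, diagonal_sub]

private lemma my_trace_conj_ge {M X : Matrix n n ℝ} {s : ℝ} (h : (M - s • 1).PosSemidef) :
    s * ‖X‖^2 ≤ (Xᴴ * M * X).trace := by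
  have h1 := my_trace_psd_nonneg (h.conjTranspose_mul_mul_same X)
  have e : Xᴴ * (M - s • 1) * X = Xᴴ * M * X - s • (Xᴴ * X) := by
    rw [mul_sub, sub_mul]; congr 1
    rw [mul_smul_comm, smul_mul_assoc, mul_one]
  rw [e, trace_sub, trace_smul, smul_eq_mul, sub_nonneg, my_normsq_eq_trace] at h1
  exact h1

private lemma my_trace_mulright_ge {M X : Matrix n n ℝ} {s : ℝ} (h : (M - s • 1).PosSemidef) :
    s * ‖X‖^2 ≤ (Xᴴ * X * M).trace := by
  have h1 := my_trace_psd_nonneg (h.mul_mul_conjTranspose_same X)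
  have e : X * (M - s • 1) * Xᴴ = X * M * Xᴴ - s • (X * Xᴴ) := by
    rw [mul_sub, sub_mul]; congr 1
    rw [mul_smul_comm, smul_mul_assoc, mul_one]
  rw [e, trace_sub, trace_smul, smul_eq_mul, sub_nonneg] at h1
  have e2 : (X * M * Xᴴ).trace = (Xᴴ * X * M).trace := by
    rw [Matrix.trace_mul_cycle X M Xᴴ]
  have e3 : (X * Xᴴ).trace = ‖X‖^2 := by
    rw [Matrix.trace_mul_comm, my_normsq_eq_trace]
  rw [e2, e3] at h1
  exact h1

private lemma my_conj_mul {V : Matrix n n ℝ} (hV : Vᴴ * V = 1) (f g : n → ℝ) :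
    (V * diagonal f * Vᴴ) * (V * diagonal g * Vᴴ) =
      V * diagonal (fun i => f i * g i) * Vᴴ := by
  have h : diagonal f * (Vᴴ * V) * diagonal g = diagonal (fun i => f i * g i) := by
    rw [hV, mul_one, diagonal_mul_diagonal]
  calc (V * diagonal f * Vᴴ) * (V * diagonal g * Vᴴ)
      = V * (diagonal f * (Vᴴ * V) * diagonal g) * Vᴴ := by noncomm_ring
    _ = V * diagonal (fun i => f i * g i) * Vᴴ := by rw [h]

private lemma my_norm_conj {V : Matrix n n ℝ} (hV : Vᴴ * V = 1)
    (M : Matrix n n ℝ) : ‖V * M * Vᴴ‖ = ‖M‖ := by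
  have e1 : (V * M * Vᴴ)ᴴ * (V * M * Vᴴ) = V * (Mᴴ * M) * Vᴴ := by
    simp only [conjTranspose_mul, conjTranspose_conjTranspose]
    calc V * (Mᴴ * Vᴴ) * (V * M * Vᴴ) = V * (Mᴴ * ((Vᴴ * V) * M)) * Vᴴ := by noncomm_ring
    _ = V * (Mᴴ * M) * Vᴴ := by rw [hV, one_mul]
  have e2 : (V * (Mᴴ * M) * Vᴴ).trace = (Mᴴ * M).trace := by
    rw [Matrix.trace_mul_cycle, ← mul_assoc, hV, one_mul]
  rw [my_norm_eq_sqrt_trace, my_norm_eq_sqrt_trace M, e1, e2]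

private lemma my_conj_one {V : Matrix n n ℝ} (hV2 : V * Vᴴ = 1) :
    V * diagonal (fun _ => (1:ℝ)) * Vᴴ = 1 := by
  rw [diagonal_one, mul_one, hV2]

private lemma my_inv_conj {V : Matrix n n ℝ} (hV : Vᴴ * V = 1) (hV2 : V * Vᴴ = 1)
    (f : n → ℝ) (hf : ∀ i, f i ≠ 0) :
    (V * diagonal f * Vᴴ)⁻¹ = V * diagonal (fun i => (f i)⁻¹) * Vᴴ := by
  apply Matrix.inv_eq_right_inv
  rw [my_conj_mul hV]
  have : (fun i => f i * (f i)⁻¹) = fun _ => (1:ℝ) := by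
    funext i; exact mul_inv_cancel₀ (hf i)
  rw [this, my_conj_one hV2]

private lemma my_norm_conj_diag {V : Matrix n n ℝ} (hV : Vᴴ * V = 1) (f : n → ℝ) :
    ‖V * diagonal f * Vᴴ‖ = Real.sqrt (∑ i, (f i)^2) := by
  rw [my_norm_conj hV, my_norm_eq_sqrt]
  congr 1
  refine Finset.sum_congr rfl fun i _ => ?_
  rw [Finset.sum_eq_single i (fun j _ hj => by rw [diagonal_apply_ne' _ hj]; ring)
    (fun h => absurd (Finset.mem_univ i) h), diagonal_apply_eq]




private lemma my_spectral {M : Matrix n n ℝ} (hM : M.PosDef) :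
    ∃ V : Matrix n n ℝ, Vᴴ * V = 1 ∧ V * Vᴴ = 1 ∧
      M = V * diagonal hM.1.eigenvalues * Vᴴ ∧
      hM.posSemidef.sqrt = V * diagonal (fun i => Real.sqrt (hM.1.eigenvalues i)) * Vᴴ := by
  refine ⟨hM.1.eigenvectorUnitary, ?_, ?_, ?_, ?_⟩
  · rw [← Matrix.star_eq_conjTranspose]
    exact Unitary.coe_star_mul_self _
  · rw [← Matrix.star_eq_conjTranspose]
    exact Unitary.coe_mul_star_self _
  · have := hM.1.spectral_theorem
    rw [← Matrix.star_eq_conjTranspose]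
    simpa [RCLike.ofReal_real_eq_id] using this
  · show hM.posSemidef.1.eigenvectorUnitary.1 * diagonal ((↑) ∘ Real.sqrt ∘ hM.posSemidef.1.eigenvalues) *
      (star hM.posSemidef.1.eigenvectorUnitary : Matrix n n ℝ) = _
    rw [← Matrix.star_eq_conjTranspose]
    rfl

private lemma my_facts {M : Matrix n n ℝ} (hM : M.PosDef) (m : ℝ) (hm : 0 < m)
    (hmin : ∀ i, m ≤ hM.1.eigenvalues i) (hatt : ∃ i, hM.1.eigenvalues i = m) :
    (hM.posSemidef.sqrt - Real.sqrt m • 1).PosSemidef ∧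
    m ≤ ‖M‖ ∧ 1/m ≤ ‖M⁻¹‖ ∧
    ‖(hM.posSemidef.sqrt)⁻¹‖ ≤ Real.sqrt (Fintype.card n) / Real.sqrt m ∧
    (hM.posSemidef.sqrt)⁻¹ * hM.posSemidef.sqrt = 1 ∧
    hM.posSemidef.sqrt * (hM.posSemidef.sqrt)⁻¹ = 1 := by
  obtain ⟨V, h1, h2, hs, hq⟩ := my_spectral hM
  set lam := hM.1.eigenvalues with hlam
  have lpos : ∀ i, 0 < lam i := fun i => hM.eigenvalues_pos i
  obtain ⟨i0, hi0⟩ := hatt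
  have hinv : (hM.posSemidef.sqrt)⁻¹ =
      V * diagonal (fun i => (Real.sqrt (lam i))⁻¹) * Vᴴ := by
    rw [hq]
    exact my_inv_conj h1 h2 _ (fun i => (Real.sqrt_pos.2 (lpos i)).ne')
  refine ⟨?_, ?_, ?_, ?_, ?_, ?_⟩
  · rw [hq, my_conj_sub_smul h2]
    exact (Matrix.posSemidef_diagonal_iff.2
      (fun i => sub_nonneg.2 (Real.sqrt_le_sqrt (hmin i)))).mul_mul_conjTranspose_same V
  · rw [hs, my_norm_conj_diag h1]
    rw [show m = Real.sqrt (m^2) from (Real.sqrt_sq hm.le).symm]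
    apply Real.sqrt_le_sqrt
    calc m^2 = lam i0 ^2 := by rw [hi0]
    _ ≤ ∑ i, lam i ^2 := Finset.single_le_sum (f := fun i => lam i ^ 2) (fun i _ => sq_nonneg _) (Finset.mem_univ i0)
  · rw [hs, my_inv_conj h1 h2 _ (fun i => (lpos i).ne'), my_norm_conj_diag h1]
    rw [show (1:ℝ)/m = Real.sqrt ((1/m)^2) from (Real.sqrt_sq (by positivity)).symm]
    apply Real.sqrt_le_sqrt
    calc (1/m)^2 = (lam i0)⁻¹^2 := by rw [hi0]; rw [one_div]
    _ ≤ ∑ i, (lam i)⁻¹^2 := Finset.single_le_sum (f := fun i => (lam i)⁻¹ ^ 2) (fun i _ => sq_nonneg _) (Finset.mem_univ i0)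
  · rw [hinv, my_norm_conj_diag h1]
    have e : ∀ i, ((Real.sqrt (lam i))⁻¹)^2 = (lam i)⁻¹ := by
      intro i
      rw [inv_pow, Real.sq_sqrt (lpos i).le]
    simp_rw [e]
    have hb : ∑ i, (lam i)⁻¹ ≤ (Fintype.card n : ℝ) * m⁻¹ := by
      calc ∑ i, (lam i)⁻¹ ≤ ∑ _i : n, m⁻¹ :=
        Finset.sum_le_sum (fun i _ => inv_anti₀ hm (hmin i))
      _ = (Fintype.card n : ℝ) * m⁻¹ := by
        rw [Finset.sum_const, nsmul_eq_mul, Finset.card_univ]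
    calc Real.sqrt (∑ i, (lam i)⁻¹) ≤ Real.sqrt ((Fintype.card n : ℝ) * m⁻¹) :=
      Real.sqrt_le_sqrt hb
    _ = Real.sqrt (Fintype.card n) / Real.sqrt m := by
      rw [Real.sqrt_mul (by positivity), Real.sqrt_inv, div_eq_mul_inv]
  · rw [hinv, hq, my_conj_mul h1]
    have : (fun i => (Real.sqrt (lam i))⁻¹ * Real.sqrt (lam i)) = fun _ => (1:ℝ) := by
      funext i; exact inv_mul_cancel₀ (Real.sqrt_pos.2 (lpos i)).ne'
    rw [this, my_conj_one h2]
  · rw [hinv, hq, my_conj_mul h1]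
    have : (fun i => Real.sqrt (lam i) * (Real.sqrt (lam i))⁻¹) = fun _ => (1:ℝ) := by
      funext i; exact mul_inv_cancel₀ (Real.sqrt_pos.2 (lpos i)).ne'
    rw [this, my_conj_one h2]

end InvSqrtAuxiliary

/-- For every `c > 0` there is a constant `C` (depending only on `d` and `c`)
such that for all positive definite `d × d` matrices `A, B` with all eigenvalues bounded below
by `c`, `‖A^{-1/2} − B^{-1/2}‖ ≤ C · (max{‖A‖,‖B‖})^{1/2} · ‖A⁻¹‖ · ‖B⁻¹‖ · ‖A − B‖`
(Frobenius norm). -/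
theorem inv_sqrt_lipschitz_bound
    (d : ℕ) (c : ℝ) (hc : 0 < c) :
    ∃ C : ℝ,
      ∀ (A B : Matrix (Fin d) (Fin d) ℝ) (hA : A.PosDef) (hB : B.PosDef),
        (∀ i, c ≤ hA.1.eigenvalues i) → (∀ i, c ≤ hB.1.eigenvalues i) →
        ‖(hA.posSemidef.sqrt)⁻¹ - (hB.posSemidef.sqrt)⁻¹‖ ≤
          C * Real.sqrt (max ‖A‖ ‖B‖) * ‖A⁻¹‖ * ‖B⁻¹‖ * ‖A - B‖ := by
  refine ⟨(d : ℝ), ?_⟩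
  intro A B hA hB hAe hBe
  rcases Nat.eq_zero_or_pos d with hd | hd
  · subst hd
    have hz : (hA.posSemidef.sqrt)⁻¹ - (hB.posSemidef.sqrt)⁻¹ = 0 := Subsingleton.elim _ _
    rw [hz, norm_zero]
    simp
  haveI : Nonempty (Fin d) := ⟨⟨0, hd⟩⟩
  -- minimal eigenvalues
  obtain ⟨ia, -, hia⟩ := Finset.exists_min_image Finset.univ hA.1.eigenvalues
    (Finset.univ_nonempty)
  obtain ⟨ib, -, hib⟩ := Finset.exists_min_image Finset.univ hB.1.eigenvalues
    (Finset.univ_nonempty)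
  set a := hA.1.eigenvalues ia with haa
  set b := hB.1.eigenvalues ib with hbb
  have hapos : 0 < a := hA.eigenvalues_pos ia
  have hbpos : 0 < b := hB.eigenvalues_pos ib
  obtain ⟨ApsdS, hAnorm, hAinv, hASinv, hASl, hASr⟩ :=
    my_facts hA a hapos (fun i => hia i (Finset.mem_univ i)) ⟨ia, rfl⟩
  obtain ⟨BpsdS, hBnorm, hBinv, hBSinv, hBSl, hBSr⟩ :=
    my_facts hB b hbpos (fun i => hib i (Finset.mem_univ i)) ⟨ib, rfl⟩
  set SA := hA.posSemidef.sqrt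
  set SB := hB.posSemidef.sqrt
  set X := SB - SA with hX
  set sa := Real.sqrt a
  set sb := Real.sqrt b
  have hsa : 0 < sa := Real.sqrt_pos.2 hapos
  have hsb : 0 < sb := Real.sqrt_pos.2 hbpos
  have hsa2 : sa^2 = a := Real.sq_sqrt hapos.le
  have hsb2 : sb^2 = b := Real.sq_sqrt hbpos.le
  -- identity
  have idm : SA⁻¹ - SB⁻¹ = SA⁻¹ * X * SB⁻¹ := by
    have : SA⁻¹ * X * SB⁻¹ = SA⁻¹ * (SB * SB⁻¹) - (SA⁻¹ * SA) * SB⁻¹ := by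
      rw [hX]; noncomm_ring
    rw [this, hBSr, hASl, mul_one, one_mul]
  -- Sylvester bound
  have sylv : SB * X + X * SA = B - A := by
    have e1 : SB * SB = B := by
      obtain ⟨V, h1, h2, hs, hq⟩ := my_spectral hB
      rw [show SB = _ from hq, my_conj_mul h1]
      refine Eq.trans ?_ hs.symm
      congr 2; exact congrArg diagonal (funext fun i => Real.mul_self_sqrt (hB.eigenvalues_pos i).le)
    have e2 : SA * SA = A := by
      obtain ⟨V, h1, h2, hs, hq⟩ := my_spectral hA
      rw [show SA = _ from hq, my_conj_mul h1]
      refine Eq.trans ?_ hs.symm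
      congr 2; exact congrArg diagonal (funext fun i => Real.mul_self_sqrt (hA.eigenvalues_pos i).le)
    calc SB * X + X * SA = SB * SB - SA * SA := by rw [hX]; noncomm_ring
    _ = B - A := by rw [e1, e2]
  have tineq : (sb + sa) * ‖X‖^2 ≤ ‖X‖ * ‖A - B‖ := by
    calc (sb + sa) * ‖X‖^2 = sb * ‖X‖^2 + sa * ‖X‖^2 := by ring
    _ ≤ (Xᴴ * SB * X).trace + (Xᴴ * X * SA).trace :=
        add_le_add (my_trace_conj_ge BpsdS) (my_trace_mulright_ge ApsdS)
    _ = (Xᴴ * (B - A)).trace := by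
        rw [← sylv, mul_add, ← mul_assoc, ← mul_assoc, trace_add]
    _ ≤ ‖X‖ * ‖B - A‖ := my_trace_form_le _ _
    _ = ‖X‖ * ‖A - B‖ := by rw [norm_sub_rev B A]
  have hXb : ‖X‖ ≤ ‖A - B‖ / (sa + sb) := by
    rcases (norm_nonneg X).eq_or_lt with h0 | h0
    · rw [← h0]; positivity
    · rw [le_div_iff₀ (by positivity)]
      have := tineq
      nlinarith [this, h0]
  -- norm chain
  have chain : ‖SA⁻¹ - SB⁻¹‖ ≤ ‖SA⁻¹‖ * ‖X‖ * ‖SB⁻¹‖ := by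
    rw [idm]
    calc ‖SA⁻¹ * X * SB⁻¹‖ ≤ ‖SA⁻¹ * X‖ * ‖SB⁻¹‖ := Matrix.frobenius_norm_mul _ _
    _ ≤ ‖SA⁻¹‖ * ‖X‖ * ‖SB⁻¹‖ :=
        mul_le_mul_of_nonneg_right (Matrix.frobenius_norm_mul _ _) (norm_nonneg _)
  have cardeq : Real.sqrt (Fintype.card (Fin d)) = Real.sqrt d := by
    rw [Fintype.card_fin]
  rw [cardeq] at hASinv hBSinv
  set K := Real.sqrt d
  have hK : 0 ≤ K := Real.sqrt_nonneg _
  have hK2 : K^2 = (d:ℝ) := Real.sq_sqrt (Nat.cast_nonneg d)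
  -- middle bound
  have mid : ‖SA⁻¹‖ * ‖X‖ * ‖SB⁻¹‖ ≤ (K/sa) * (‖A - B‖/(sa+sb)) * (K/sb) := by
    have h1 : ‖SA⁻¹‖ * ‖X‖ ≤ (K/sa) * (‖A - B‖/(sa+sb)) :=
      mul_le_mul hASinv hXb (norm_nonneg _) (by positivity)
    exact mul_le_mul h1 hBSinv (norm_nonneg _) (by positivity)
  -- comparison of scalars
  set S := Real.sqrt (max ‖A‖ ‖B‖) with hS
  have smax : max sa sb ≤ S :=
    max_le (Real.sqrt_le_sqrt (le_trans hAnorm (le_max_left _ _)))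
      (Real.sqrt_le_sqrt (le_trans hBnorm (le_max_right _ _)))
  have hmaxnn : 0 ≤ max sa sb := le_max_of_le_left hsa.le
  have q : 1/(sa*sb*(sa+sb)) ≤ (max sa sb)*(1/sa^2)*(1/sb^2) := by
    rcases le_total sa sb with h | h
    · rw [max_eq_right h]
      have e : sb*(1/sa^2)*(1/sb^2) = sb/(sa^2*sb^2) := by ring
      rw [e, div_le_div_iff₀ (by positivity) (by positivity)]
      nlinarith [mul_pos (mul_pos hsa hsb) (mul_pos hsb hsb)]
    · rw [max_eq_left h]
      have e : sa*(1/sa^2)*(1/sb^2) = sa/(sa^2*sb^2) := by ring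
      rw [e, div_le_div_iff₀ (by positivity) (by positivity)]
      nlinarith [mul_pos (mul_pos hsa hsa) (mul_pos hsa hsb)]
  have final : (K/sa) * (‖A - B‖/(sa+sb)) * (K/sb) ≤
      (d:ℝ) * S * ‖A⁻¹‖ * ‖B⁻¹‖ * ‖A - B‖ := by
    have hab : 0 ≤ ‖A - B‖ := norm_nonneg _
    calc (K/sa) * (‖A - B‖/(sa+sb)) * (K/sb)
        = (1/(sa*sb*(sa+sb))) * (K^2 * ‖A - B‖) := by
          field_simp
      _ ≤ ((max sa sb)*(1/sa^2)*(1/sb^2)) * (K^2 * ‖A - B‖) := by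
          exact mul_le_mul_of_nonneg_right q (by positivity)
      _ = (d:ℝ) * (max sa sb) * (1/a) * (1/b) * ‖A - B‖ := by
          rw [hK2, ← hsa2, ← hsb2]; ring
      _ ≤ (d:ℝ) * S * ‖A⁻¹‖ * ‖B⁻¹‖ * ‖A - B‖ := by
          gcongr <;> first
            | exact Nat.cast_nonneg d
            | exact smax
            | exact hAinv
            | exact hBinv
            | positivity
  calc ‖SA⁻¹ - SB⁻¹‖ ≤ ‖SA⁻¹‖ * ‖X‖ * ‖SB⁻¹‖ := chain
    _ ≤ (K/sa) * (‖A - B‖/(sa+sb)) * (K/sb) := mid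
    _ ≤ (d:ℝ) * S * ‖A⁻¹‖ * ‖B⁻¹‖ * ‖A - B‖ := final
end
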